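/- Let x, y, s, t be integers such that x^2 - 1 - s^2 - s^4 = t^2 and y^2 - 1 - t^2 - t^4 = s^2. Then (x,y,s,t) = (±(u^2+1), ±(u^2+1), ±u, ±u) for some integer u. -/
import Mathlib


theorem stmt_13 (x y s t : ℤ)
    (h1 : x^2 - 1 - s^2 - s^4 = t^2) (h2 : y^2 - 1 - t^2 - t^4 = s^2) :
    ∃ u : ℤ, (x = u^2 + 1 ∨ x = -(u^2 + 1)) ∧ (y = u^2 + 1 ∨ y = -(u^2 + 1)) ∧
      (s = u ∨ s = -u) ∧ (t = u ∨ t = -u) := by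
  have hax : s^2 + 1 ≤ |x| := by
    nlinarith [sq_abs x, abs_nonneg x, sq_nonneg s, sq_nonneg t]
  have hay : t^2 + 1 ≤ |y| := by
    nlinarith [sq_abs y, abs_nonneg y, sq_nonneg s, sq_nonneg t]
  have hts : s^2 ≤ t^2 := by nlinarith [sq_abs x, abs_nonneg x]
  have hst : t^2 ≤ s^2 := by nlinarith [sq_abs y, abs_nonneg y]
  have hse : t^2 = s^2 := le_antisymm hst hts
  refine ⟨s, ?_, ?_, Or.inl rfl, ?_⟩
  · have : (x - (s^2+1)) * (x + (s^2+1)) = 0 := by nlinarith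
    rcases mul_eq_zero.mp this with h | h
    · exact Or.inl (by linarith)
    · exact Or.inr (by linarith)
  · have : (y - (s^2+1)) * (y + (s^2+1)) = 0 := by nlinarith
    rcases mul_eq_zero.mp this with h | h
    · exact Or.inl (by linarith)
    · exact Or.inr (by linarith)
  · have : (t - s) * (t + s) = 0 := by nlinarith
    rcases mul_eq_zero.mp this with h | h
    · exact Or.inl (by linarith)
    · exact Or.inr (by linarith)
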